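/- Let c_min(θ) = sin²θ/cosθ for −π/2 < θ < π/2. For each c > 0, the equation c = c_min(θ) with 0 < θ < π/2 has the unique solution θ = ϑ(c) := arctan√((c/2)(√(c²+4) + c)). -/
import Mathlib


/-- Let c_min(θ) = sin²θ/cosθ on (−π/2, π/2). For each c > 0 the equation
c = c_min(θ) with 0 < θ < π/2 has the unique solution
θ = ϑ(c) = arctan √((c/2)(√(c²+4) + c)). -/
theorem stmt16 (c : ℝ) (hc : 0 < c) :
    Real.arctan (Real.sqrt ((c / 2) * (Real.sqrt (c ^ 2 + 4) + c)))
        ∈ Set.Ioo 0 (Real.pi / 2) ∧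
    Real.sin (Real.arctan (Real.sqrt ((c / 2) * (Real.sqrt (c ^ 2 + 4) + c)))) ^ 2
        / Real.cos (Real.arctan (Real.sqrt ((c / 2) * (Real.sqrt (c ^ 2 + 4) + c)))) = c ∧
    ∀ θ ∈ Set.Ioo 0 (Real.pi / 2),
      Real.sin θ ^ 2 / Real.cos θ = c →
        θ = Real.arctan (Real.sqrt ((c / 2) * (Real.sqrt (c ^ 2 + 4) + c))) := by
  set s := Real.sqrt (c ^ 2 + 4) with hs
  have hs2 : s ^ 2 = c ^ 2 + 4 := Real.sq_sqrt (by positivity)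
  have hs0 : 0 ≤ s := Real.sqrt_nonneg _
  set ν := (c / 2) * (s + c) with hν
  have hν0 : 0 < ν := by
    have : 0 < s + c := by nlinarith
    positivity
  have hkey : ν ^ 2 = c ^ 2 * (ν + 1) := by
    rw [hν]; nlinarith [hs2]
  set t := Real.sqrt ν with ht
  have ht2 : t ^ 2 = ν := Real.sq_sqrt hν0.le
  have ht0 : 0 < t := Real.sqrt_pos.mpr hν0
  -- √(1+t²) = ν/c
  have hsq : Real.sqrt (1 + t ^ 2) = ν / c := by
    rw [ht2]
    rw [show (1 : ℝ) + ν = (ν / c) ^ 2 by field_simp; nlinarith [hkey]]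
    exact Real.sqrt_sq (by positivity)
  have hcos : Real.cos (Real.arctan t) = c / ν := by
    rw [Real.cos_arctan, hsq]
    rw [one_div, inv_div]
  have hsin : Real.sin (Real.arctan t) = t * c / ν := by
    rw [Real.sin_arctan, hsq, div_div_eq_mul_div]
  refine ⟨⟨(by simpa using Real.arctan_strictMono ht0 : 0 < Real.arctan t), Real.arctan_lt_pi_div_two t⟩, ?_, ?_⟩
  · rw [hsin, hcos]
    field_simp
    nlinarith [ht2]
  · rintro θ ⟨hθ0, hθ1⟩ heq
    have hcθ : 0 < Real.cos θ := Real.cos_pos_of_mem_Ioo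
      ⟨by linarith [Real.pi_pos], hθ1⟩
    have hsc : Real.sin θ ^ 2 = c * Real.cos θ := by
      field_simp at heq; linarith [heq]
    have hpyth : Real.sin θ ^ 2 + Real.cos θ ^ 2 = 1 := Real.sin_sq_add_cos_sq θ
    -- cos θ satisfies x^2 + c x - 1 = 0, as does c/ν
    have h2 : (c / ν) ^ 2 + c * (c / ν) - 1 = 0 := by
      field_simp
      nlinarith [hkey]
    have hcν : 0 < c / ν := by positivity
    have h1 : Real.cos θ ^ 2 + c * Real.cos θ - 1 = 0 := by linarith [hsc, hpyth]
    have hfac : (Real.cos θ - c / ν) * (Real.cos θ + c / ν + c) = 0 := by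
      linear_combination h1 - h2
    have hcoseq : Real.cos θ = c / ν := by
      rcases mul_eq_zero.mp hfac with h | h
      · linarith
      · linarith [hcθ, hcν, hc]
    have : Real.cos θ = Real.cos (Real.arctan t) := by rw [hcoseq, hcos]
    have hπ := Real.pi_pos
    have harc := (by simpa using Real.arctan_strictMono ht0 : 0 < Real.arctan t)
    have harc2 := Real.arctan_lt_pi_div_two t
    exact Real.injOn_cos ⟨hθ0.le, by linarith⟩ ⟨harc.le, by linarith⟩ this
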